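/- Let R_1, R_2, R_3 > 0 and τ_1, τ_2, τ_3 > 0 with τ_1 + τ_2 + τ_3 = 1 and R_1/τ_1 < R_2/τ_2 < R_3/τ_3. Then (2^{R_1}-1)/(2^{R_1/τ_1}-1) + 2^{R_1}·(2^{R_2}-1)/(2^{R_2/τ_2}-1) + 2^{R_1+R_2}·(2^{R_3}-1)/(2^{R_3/τ_3}-1) < 1. -/

import Mathlib

open Real

lemma slope_aux (β x y : ℝ) (hβ0 : 0 < β) (hβ1 : β < 1)
    (hx : 1 < x) (hxy : x < y) :
    (y ^ β - 1) / (y - 1) < (x ^ β - 1) / (x - 1) := by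
  have hy1 : (0:ℝ) < y - 1 := by linarith
  have hx1 : (0:ℝ) < x - 1 := by linarith
  have hyx : (0:ℝ) < y - x := by linarith
  have ha : 0 < (y - x) / (y - 1) := by positivity
  have hb : 0 < (x - 1) / (y - 1) := by positivity
  have hab : (y - x) / (y - 1) + (x - 1) / (y - 1) = 1 := by field_simp; ring
  have hkey := (Real.strictConcaveOn_rpow hβ0 hβ1).2 (x := (1:ℝ)) (y := y)
    (by norm_num) (Set.mem_Ici.2 (by linarith)) (by intro h; linarith)
    ha hb hab
  simp only [smul_eq_mul, mul_one, Real.one_rpow] at hkey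
  have hcomb : (y - x) / (y - 1) + (x - 1) / (y - 1) * y = x := by
    field_simp; ring
  rw [hcomb] at hkey
  rw [div_lt_div_iff₀ hy1 hx1]
  have h2 : (y - x) / (y - 1) + (x - 1) / (y - 1) * y ^ β < x ^ β := by
    simpa using hkey
  have h3 : (y - x) + (x - 1) * y ^ β < x ^ β * (y - 1) := by
    have := mul_lt_mul_of_pos_right h2 hy1
    calc (y - x) + (x - 1) * y ^ β
        = ((y - x) / (y - 1) + (x - 1) / (y - 1) * y ^ β) * (y - 1) := by field_simp
      _ < x ^ β * (y - 1) := this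
  nlinarith

lemma merge_aux (α β u v : ℝ) (hα : 0 < α) (hβ0 : 0 < β) (hβ1 : β < 1)
    (hu : 1 < u) (huv : u < v) :
    (u ^ α - 1) / (u - 1) + u ^ α * (v ^ β - 1) / (v - 1) <
      (u ^ (α + β) - 1) / (u - 1) := by
  have hu1 : (0:ℝ) < u - 1 := by linarith
  have hupos : (0:ℝ) < u ^ α := Real.rpow_pos_of_pos (by linarith) _
  have hslope := slope_aux β u v hβ0 hβ1 hu huv
  have hsplit : (u ^ (α + β) - 1) / (u - 1)
      = (u ^ α - 1) / (u - 1) + u ^ α * ((u ^ β - 1) / (u - 1)) := by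
    rw [Real.rpow_add (by linarith)]
    field_simp
    ring
  rw [hsplit, mul_div_assoc]
  have := mul_lt_mul_of_pos_left hslope hupos
  linarith

theorem stmt_16 (R₁ R₂ R₃ τ₁ τ₂ τ₃ : ℝ)
    (hR₁ : 0 < R₁) (hR₂ : 0 < R₂) (hR₃ : 0 < R₃)
    (hτ₁ : 0 < τ₁) (hτ₂ : 0 < τ₂) (hτ₃ : 0 < τ₃)
    (hτsum : τ₁ + τ₂ + τ₃ = 1)
    (hord₁ : R₁ / τ₁ < R₂ / τ₂) (hord₂ : R₂ / τ₂ < R₃ / τ₃) :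
    ((2 : ℝ) ^ R₁ - 1) / ((2 : ℝ) ^ (R₁ / τ₁) - 1) +
        (2 : ℝ) ^ R₁ * ((2 : ℝ) ^ R₂ - 1) / ((2 : ℝ) ^ (R₂ / τ₂) - 1) +
        (2 : ℝ) ^ (R₁ + R₂) * ((2 : ℝ) ^ R₃ - 1) / ((2 : ℝ) ^ (R₃ / τ₃) - 1) < 1 := by
  set u₁ : ℝ := (2:ℝ) ^ (R₁ / τ₁) with hu₁def
  set u₂ : ℝ := (2:ℝ) ^ (R₂ / τ₂) with hu₂def
  set u₃ : ℝ := (2:ℝ) ^ (R₃ / τ₃) with hu₃def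
  have h2 : (1:ℝ) < 2 := one_lt_two
  have hx₁ : 0 < R₁ / τ₁ := by positivity
  have hu₁ : 1 < u₁ := Real.one_lt_rpow_iff_of_pos (by norm_num) |>.2 (Or.inl ⟨h2, hx₁⟩)
  have hu₁₂ : u₁ < u₂ := (Real.rpow_lt_rpow_left_iff h2).2 hord₁
  have hu₂₃ : u₂ < u₃ := (Real.rpow_lt_rpow_left_iff h2).2 hord₂
  have hu₂ : 1 < u₂ := by linarith
  have hu₂pos : (0:ℝ) < u₂ := by linarith
  have e₁ : (2:ℝ) ^ R₁ = u₁ ^ τ₁ := by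
    rw [hu₁def, ← Real.rpow_mul (by norm_num), div_mul_cancel₀ _ hτ₁.ne']
  have e₂ : (2:ℝ) ^ R₂ = u₂ ^ τ₂ := by
    rw [hu₂def, ← Real.rpow_mul (by norm_num), div_mul_cancel₀ _ hτ₂.ne']
  have e₃ : (2:ℝ) ^ R₃ = u₃ ^ τ₃ := by
    rw [hu₃def, ← Real.rpow_mul (by norm_num), div_mul_cancel₀ _ hτ₃.ne']
  have e₁₂ : (2:ℝ) ^ (R₁ + R₂) = u₁ ^ τ₁ * u₂ ^ τ₂ := by
    rw [Real.rpow_add (by norm_num), e₁, e₂]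
  rw [e₁, e₂, e₃, e₁₂]
  have hτ₃1 : τ₃ < 1 := by linarith
  have hu₁τpos : (0:ℝ) < u₁ ^ τ₁ := Real.rpow_pos_of_pos (by linarith) _
  -- merge last two terms
  have hm₁ := merge_aux τ₂ τ₃ u₂ u₃ hτ₂ hτ₃ hτ₃1 hu₂ hu₂₃
  have hm₂ := merge_aux τ₁ (τ₂ + τ₃) u₁ u₂ hτ₁ (by linarith) (by linarith) hu₁ hu₁₂
  have hfin : u₁ ^ (τ₁ + (τ₂ + τ₃)) = u₁ := by
    rw [show τ₁ + (τ₂ + τ₃) = 1 by linarith, Real.rpow_one]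
  have step1 : u₁ ^ τ₁ * ((u₂ ^ τ₂ - 1) / (u₂ - 1) + u₂ ^ τ₂ * (u₃ ^ τ₃ - 1) / (u₃ - 1))
      < u₁ ^ τ₁ * ((u₂ ^ (τ₂ + τ₃) - 1) / (u₂ - 1)) := by
    exact mul_lt_mul_of_pos_left hm₁ hu₁τpos
  have step2 : (u₁ ^ τ₁ - 1) / (u₁ - 1) + u₁ ^ τ₁ * ((u₂ ^ (τ₂ + τ₃) - 1) / (u₂ - 1))
      < 1 := by
    have := hm₂
    rw [hfin] at this
    have h1 : (u₁ - 1) / (u₁ - 1) = 1 := div_self (by linarith)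
    rw [mul_div_assoc] at this
    linarith [this, h1.symm ▸ this]
  calc (u₁ ^ τ₁ - 1) / (u₁ - 1) + u₁ ^ τ₁ * (u₂ ^ τ₂ - 1) / (u₂ - 1) +
        u₁ ^ τ₁ * u₂ ^ τ₂ * (u₃ ^ τ₃ - 1) / (u₃ - 1)
      = (u₁ ^ τ₁ - 1) / (u₁ - 1) +
        u₁ ^ τ₁ * ((u₂ ^ τ₂ - 1) / (u₂ - 1) + u₂ ^ τ₂ * (u₃ ^ τ₃ - 1) / (u₃ - 1)) := by
        ring
    _ < (u₁ ^ τ₁ - 1) / (u₁ - 1) + u₁ ^ τ₁ * ((u₂ ^ (τ₂ + τ₃) - 1) / (u₂ - 1)) := by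
        linarith
    _ < 1 := step2
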